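/- Let G be a connected simple graph, let T be a spanning tree of G rooted at a vertex r, and let e = {v, u} be an edge of T where u is a child of v (i.e., v lies on the unique T-path from u to r). Then e is a bridge of G if and only if every edge of G other than e that has an endpoint in the subtree of u has both of its endpoints in the subtree of u. -/

import Mathlib

/-- The subtree of `u` in a tree `T` rooted at `r`: the set of vertices `x` such that
`u` lies on the (unique) path in `T` from `x` to `r`. -/
def subtreeOf {V : Type*} (T : SimpleGraph V) (r u : V) : Set V :=
  {x | ∀ p : T.Path x r, u ∈ p.val.support}

private lemma crossing_lemma {V : Type*} {H : SimpleGraph V} {S : Set V} :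
    ∀ {a b : V}, H.Walk a b → a ∉ S → b ∈ S → ∃ x y, H.Adj x y ∧ x ∉ S ∧ y ∈ S := by
  intro a b w
  induction w with
  | nil => exact fun h h' => absurd h' h
  | @cons a c b h p ih =>
    intro ha hb
    by_cases hc : c ∈ S
    · exact ⟨a, c, h, ha, hc⟩
    · exact ih hc hb

theorem stmt_3 {V : Type*} (G T : SimpleGraph V) (hG : G.Connected) (hT : T.IsTree)
    (hTG : T ≤ G) (r v u : V) (hvu : T.Adj v u)
    (hchild : ∀ p : T.Path u r, v ∈ p.val.support) :
    G.IsBridge s(v, u) ↔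
      ∀ a b : V, G.Adj a b → s(a, b) ≠ s(v, u) →
        a ∈ subtreeOf T r u → b ∈ subtreeOf T r u := by
  classical
  set e : Sym2 V := s(v, u) with he
  set S := subtreeOf T r u with hSdef
  have hmemS : ∀ x : V, x ∈ S ↔ ∀ p : T.Path x r, u ∈ p.val.support := fun _ => Iff.rfl
  -- a path from u to r
  obtain ⟨pw⟩ := hT.isConnected.preconnected u r
  set p0 : T.Path u r := pw.toPath with hp0
  have hv0 : v ∈ p0.val.support := hchild p0
  set qv : T.Walk v r := p0.val.dropUntil v hv0 with hqv
  have hqv_path : qv.IsPath := p0.prop.dropUntil hv0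
  have hu_not : u ∉ qv.support := by
    intro hu
    have hnd := p0.prop.support_nodup
    rw [← p0.val.take_spec hv0, SimpleGraph.Walk.support_append, List.nodup_append] at hnd
    have h1 : u ∈ (p0.val.takeUntil v hv0).support := SimpleGraph.Walk.start_mem_support _
    have h2 : u ∈ qv.support.tail := by
      have := qv.support_eq_cons
      rw [this] at hu
      rcases List.mem_cons.mp hu with hu | hu
      · exact absurd hu hvu.ne'
      · exact hu
    exact hnd.2.2 u h1 u h2 rfl
  have hvS : v ∉ S := fun h => hu_not (h ⟨qv, hqv_path⟩)
  have huS : u ∈ S := fun p => p.val.start_mem_support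
  -- key 1 : members of S reach u avoiding e
  have key1 : ∀ x ∈ S, (T.deleteEdges {e}).Reachable x u := by
    intro x hx
    obtain ⟨pxw⟩ := hT.isConnected.preconnected x r
    set p : T.Path x r := pxw.toPath with hp
    have hup : u ∈ p.val.support := hx p
    set q : T.Walk x u := p.val.takeUntil u hup with hq
    have hqe : ∀ e' ∈ q.edges, e' ∉ ({e} : Set (Sym2 V)) := by
      intro e' he' hmem
      have heq : e' = e := hmem
      subst heq
      have hvq : v ∈ q.support := q.fst_mem_support_of_mem_edges he'
      have hdrop_path : (p.val.dropUntil u hup).IsPath := p.prop.dropUntil hup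
      have hvd : v ∈ (p.val.dropUntil u hup).support := hchild ⟨_, hdrop_path⟩
      have hvd' : v ∈ (p.val.dropUntil u hup).support.tail := by
        have := (p.val.dropUntil u hup).support_eq_cons
        rw [this] at hvd
        rcases List.mem_cons.mp hvd with hvd | hvd
        · exact absurd hvd hvu.ne
        · exact hvd
      have hnd := p.prop.support_nodup
      rw [← p.val.take_spec hup, SimpleGraph.Walk.support_append, List.nodup_append] at hnd
      exact hnd.2.2 v hvq v hvd' rfl
    exact ⟨q.toDeleteEdges {e} hqe⟩
  -- key 2 : non-members of S reach v avoiding e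
  have key2 : ∀ x, x ∉ S → (T.deleteEdges {e}).Reachable x v := by
    intro x hx
    obtain ⟨p, hup⟩ := not_forall.mp hx
    have hqe : ∀ e' ∈ p.val.edges, e' ∉ ({e} : Set (Sym2 V)) := by
      intro e' he' hmem
      have heq : e' = e := hmem
      subst heq
      exact hup (p.val.snd_mem_support_of_mem_edges he')
    have h1 : (T.deleteEdges {e}).Reachable x r := ⟨p.val.toDeleteEdges {e} hqe⟩
    have hqe2 : ∀ e' ∈ qv.edges, e' ∉ ({e} : Set (Sym2 V)) := by
      intro e' he' hmem
      have heq : e' = e := hmem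
      subst heq
      exact hu_not (qv.snd_mem_support_of_mem_edges he')
    have h2 : (T.deleteEdges {e}).Reachable v r := ⟨qv.toDeleteEdges {e} hqe2⟩
    exact h1.trans h2.symm
  -- e is a bridge of T
  have hbT : ¬(T.deleteEdges {e}).Reachable v u := by
    have hb := SimpleGraph.isAcyclic_iff_forall_adj_isBridge.mp hT.IsAcyclic hvu
    exact SimpleGraph.isBridge_iff.mp hb
  constructor
  · intro hbr a b hab hne haS
    by_contra hbS
    have hmono : T.deleteEdges {e} ≤ G.deleteEdges {e} := SimpleGraph.deleteEdges_mono hTG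
    have h1 : (G.deleteEdges {e}).Reachable a u := (key1 a haS).mono hmono
    have h2 : (G.deleteEdges {e}).Reachable b v := (key2 b hbS).mono hmono
    have hadj : (G.deleteEdges {e}).Adj b a := by
      rw [SimpleGraph.deleteEdges_adj]
      refine ⟨hab.symm, ?_⟩
      simp only [Set.mem_singleton_iff]
      rw [Sym2.eq_swap]
      exact hne
    have hreach : (G.deleteEdges {e}).Reachable v u :=
      (h2.symm.trans (hadj.reachable.trans h1))
    exact SimpleGraph.isBridge_iff.mp hbr hreach
  · intro hrhs
    rw [SimpleGraph.isBridge_iff]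
    rintro ⟨w⟩
    obtain ⟨x, y, hxy, hxS, hyS⟩ := crossing_lemma (S := S) w hvS huS
    have hxy' : (G.deleteEdges {e}).Adj x y := hxy
    rw [SimpleGraph.deleteEdges_adj] at hxy'
    refine hxS (hrhs y x hxy'.1.symm ?_ hyS)
    intro hsw
    exact hxy'.2 (by rw [Sym2.eq_swap]; exact hsw)
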